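/- Let Δ ⊆ ℝ^d be a nonempty convex compact set containing 0, R : Δ → ℝ convex and L-Lipschitz for ‖·‖₂, and R̄(δ) = inf_{δ'∈Δ}{R(δ') + L‖δ−δ'‖₂} its convex L-Lipschitz extension. Let η > 0 and let λ₀ ∈ ℝ^d be a subgradient of R̄ at 0. Given an arbitrary sequence (δ_t)_{t≥1} with δ_t ∈ Δ for all t, define recursively: γ_t is any maximizer of γ ↦ ⟨λ_t, γ⟩ − R̄(γ) over the closed Euclidean ball Δ_{δ_t} of center δ_t and radius diam(Δ), and λ_{t+1} = λ_t − η(γ_t − δ_t). Then ‖λ_t‖₂ ≤ L + 2η·diam(Δ) for all t. -/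

import Mathlib

open Metric Set
open scoped RealInnerProductSpace

private lemma le_of_sq_le_sq'' {x y : ℝ} (hx : 0 ≤ x) (hy : 0 ≤ y) (h : x ^ 2 ≤ y ^ 2) :
    x ≤ y := by nlinarith

set_option maxHeartbeats 1600000 in
/-- Key geometric lemma: if `⟪lam, q⟫ ≤ L‖q‖` for every `q` in the closed ball of center `z`
and radius `D = ‖z‖`, and `‖lam‖ > L`, then `-⟪lam, z⟫ ≥ D √(‖lam‖² - L²)`. -/
private lemma key_cone {E : Type*} [NormedAddCommGroup E] [InnerProductSpace ℝ E]
    (lam z : E) (L D : ℝ) (hL : 0 ≤ L) (hD : 0 < D) (hz : ‖z‖ = D)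
    (hn : L < ‖lam‖)
    (hyp : ∀ q : E, ‖q - z‖ ≤ D → ⟪lam, q⟫ ≤ L * ‖q‖) :
    D * Real.sqrt (‖lam‖ ^ 2 - L ^ 2) ≤ -⟪lam, z⟫ := by
  have hn0 : 0 < ‖lam‖ := lt_of_le_of_lt hL hn
  have hnne : ‖lam‖ ≠ 0 := ne_of_gt hn0
  by_contra hcon
  push_neg at hcon
  obtain ⟨S, hSdef⟩ : ∃ S : ℝ, S = Real.sqrt (‖lam‖ ^ 2 - L ^ 2) := ⟨_, rfl⟩
  rw [← hSdef] at hcon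
  have hnL2 : L ^ 2 ≤ ‖lam‖ ^ 2 := by linarith [mul_self_le_mul_self hL hn.le]
  have hS2 : S ^ 2 = ‖lam‖ ^ 2 - L ^ 2 := by
    rw [hSdef]; exact Real.sq_sqrt (by linarith)
  have hS0 : 0 < S := by
    rw [hSdef]
    exact Real.sqrt_pos.2 (by linarith [mul_self_lt_mul_self hL hn])
  obtain ⟨a, ha⟩ : ∃ a : ℝ, a = ⟪lam, z⟫ / ‖lam‖ := ⟨_, rfl⟩
  have haz : ⟪lam, z⟫ = a * ‖lam‖ := by rw [ha]; field_simp
  have hDS : -(a * ‖lam‖) < D * S := by rw [← haz]; exact hcon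
  have hlam2 : ⟪lam, lam⟫ = ‖lam‖ ^ 2 := real_inner_self_eq_norm_sq lam
  by_cases hapos : 0 < a
  · -- take q = (a/‖lam‖) • lam
    have hball : ‖(a / ‖lam‖) • lam - z‖ ≤ D := by
      have h2 : ‖(a / ‖lam‖) • lam - z‖ ^ 2 = D ^ 2 - a ^ 2 := by
        rw [norm_sub_sq_real, norm_smul, real_inner_smul_left, haz, hz, Real.norm_eq_abs,
          abs_of_pos (div_pos hapos hn0)]
        field_simp
        ring
      apply le_of_sq_le_sq'' (norm_nonneg _) hD.le
      rw [h2]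
      linarith [sq_nonneg a]
    have hq := hyp _ hball
    rw [real_inner_smul_right, hlam2, norm_smul, Real.norm_eq_abs,
      abs_of_pos (div_pos hapos hn0)] at hq
    have e1 : a / ‖lam‖ * ‖lam‖ ^ 2 = a * ‖lam‖ := by field_simp
    have e2 : a / ‖lam‖ * ‖lam‖ = a := by field_simp
    rw [e1, e2] at hq
    linarith [mul_pos (sub_pos.2 hn) hapos]
  · push_neg at hapos
    have h0 : 0 ≤ -(a * ‖lam‖) := by
      have := mul_nonneg (neg_nonneg.2 hapos) hn0.le
      linarith [this]
    have haa : a ^ 2 * ‖lam‖ ^ 2 < D ^ 2 * S ^ 2 := by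
      have hp := mul_self_lt_mul_self h0 hDS
      linarith [hp]
    obtain ⟨w, hw⟩ : ∃ w : E, w = z - (a / ‖lam‖) • lam := ⟨_, rfl⟩
    have hlw : ⟪lam, w⟫ = 0 := by
      rw [hw, inner_sub_right, real_inner_smul_right, hlam2, haz]
      field_simp
      ring
    have hwl : ⟪w, lam⟫ = 0 := by rw [real_inner_comm]; exact hlw
    have hwz : ⟪w, z⟫ = D ^ 2 - a ^ 2 := by
      rw [hw, inner_sub_left, real_inner_smul_left, real_inner_self_eq_norm_sq, hz, haz]
      field_simp
    have hb2 : ‖w‖ ^ 2 = D ^ 2 - a ^ 2 := by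
      have h1 : ⟪w, w⟫ = D ^ 2 - a ^ 2 := by
        nth_rewrite 2 [hw]
        rw [inner_sub_right, real_inner_smul_right, hwl, hwz]
        ring
      rw [← real_inner_self_eq_norm_sq, h1]
    have ha2D : a ^ 2 < D ^ 2 := by
      have e : D ^ 2 * S ^ 2 = D ^ 2 * ‖lam‖ ^ 2 - D ^ 2 * L ^ 2 := by rw [hS2]; ring
      have h1 : a ^ 2 * ‖lam‖ ^ 2 < D ^ 2 * ‖lam‖ ^ 2 := by
        have := mul_nonneg (sq_nonneg D) (sq_nonneg L)
        linarith [haa, e]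
      exact lt_of_mul_lt_mul_right h1 (pow_pos hn0 2).le
    have hb0 : 0 < ‖w‖ := by
      have hb2' : 0 < ‖w‖ ^ 2 := by rw [hb2]; linarith
      rcases lt_or_eq_of_le (norm_nonneg w) with h | h
      · exact h
      · exfalso; rw [← h] at hb2'; norm_num at hb2'
    have hbne : ‖w‖ ≠ 0 := ne_of_gt hb0
    have hkey : L * (-a) < ‖w‖ * S := by
      have e : a ^ 2 * S ^ 2 = a ^ 2 * ‖lam‖ ^ 2 - a ^ 2 * L ^ 2 := by rw [hS2]; ring
      have hsq : (L * (-a)) ^ 2 < (‖w‖ * S) ^ 2 := by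
        have hbs : (‖w‖ * S) ^ 2 = D ^ 2 * S ^ 2 - a ^ 2 * S ^ 2 := by
          rw [mul_pow, hb2]; ring
        rw [hbs]
        linarith [haa, e]
      exact lt_of_pow_lt_pow_left₀ 2 (mul_pos hb0 hS0).le hsq
    have hL1 : (0 : ℝ) < L + 1 := by linarith
    obtain ⟨A, hA⟩ : ∃ A : ℝ, A = L * (-a) / ‖w‖ := ⟨_, rfl⟩
    have hA0 : 0 ≤ A := by
      rw [hA]; exact div_nonneg (mul_nonneg hL (neg_nonneg.2 hapos)) hb0.le
    have hAS : A < S := by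
      rw [hA]
      exact (div_lt_iff₀ hb0).2 (by rw [mul_comm S ‖w‖]; exact hkey)
    obtain ⟨τ, hτ⟩ : ∃ τ : ℝ, τ = (S - A) / (L + 1) := ⟨_, rfl⟩
    have hτ0 : 0 < τ := by rw [hτ]; exact div_pos (by linarith) hL1
    obtain ⟨s', hs'⟩ : ∃ s' : ℝ, s' = -a / ‖w‖ + τ := ⟨_, rfl⟩
    have hs'0 : 0 < s' := by
      have h5 : 0 ≤ -a / ‖w‖ := div_nonneg (neg_nonneg.2 hapos) hb0.le
      rw [hs']; linarith
    have hLs' : L * s' < S := by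
      have hSA : 0 < S - A := by linarith
      have h1 : L * τ < S - A := by
        rw [hτ, mul_div_assoc']
        exact (div_lt_iff₀ hL1).2 (by linarith [hSA])
      have h2 : L * s' = A + L * τ := by rw [hs', hA]; ring
      linarith
    obtain ⟨v, hv⟩ : ∃ v : E, v = (1 / ‖lam‖) • lam + (s' / ‖w‖) • w := ⟨_, rfl⟩
    have hlv : ⟪lam, v⟫ = ‖lam‖ := by
      rw [hv, inner_add_right, real_inner_smul_right, real_inner_smul_right, hlam2, hlw]
      field_simp
      ring
    have hvz : ⟪v, z⟫ = a + s' * ‖w‖ := by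
      rw [hv, inner_add_left, real_inner_smul_left, real_inner_smul_left, haz, hwz, ← hb2]
      field_simp
    have hvzpos : 0 < ⟪v, z⟫ := by
      have he : a + s' * ‖w‖ = τ * ‖w‖ := by rw [hs']; field_simp; ring
      rw [hvz, he]
      exact mul_pos hτ0 hb0
    have hv2 : ‖v‖ ^ 2 = 1 + s' ^ 2 := by
      rw [hv, norm_add_sq_real, real_inner_smul_left, real_inner_smul_right, hlw,
        norm_smul, norm_smul, Real.norm_eq_abs, Real.norm_eq_abs,
        abs_of_pos (by positivity : (0 : ℝ) < 1 / ‖lam‖), abs_of_pos (div_pos hs'0 hb0)]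
      field_simp
      ring
    have hv2pos : (0 : ℝ) < ‖v‖ ^ 2 := by rw [hv2]; positivity
    have hvn0 : 0 < ‖v‖ := by
      rcases lt_or_eq_of_le (norm_nonneg v) with h | h
      · exact h
      · exfalso; rw [← h] at hv2pos; norm_num at hv2pos
    obtain ⟨t, ht⟩ : ∃ t : ℝ, t = ⟪v, z⟫ / ‖v‖ ^ 2 := ⟨_, rfl⟩
    have ht0 : 0 < t := by rw [ht]; exact div_pos hvzpos hv2pos
    have htv : t * ‖v‖ ^ 2 = ⟪v, z⟫ := by rw [ht]; field_simp
    have hball : ‖t • v - z‖ ≤ D := by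
      have h2 : ‖t • v - z‖ ^ 2 = D ^ 2 - t ^ 2 * ‖v‖ ^ 2 := by
        rw [norm_sub_sq_real, real_inner_smul_left, norm_smul, Real.norm_eq_abs,
          abs_of_pos ht0, hz, ← htv]
        ring
      apply le_of_sq_le_sq'' (norm_nonneg _) hD.le
      rw [h2]
      linarith [mul_nonneg (sq_nonneg t) (sq_nonneg ‖v‖)]
    have hfin := hyp _ hball
    rw [real_inner_smul_right, hlv, norm_smul, Real.norm_eq_abs, abs_of_pos ht0] at hfin
    have hnv : ‖lam‖ ≤ L * ‖v‖ := by
      by_contra hcon2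
      push_neg at hcon2
      have h6 := mul_lt_mul_of_pos_left hcon2 ht0
      linarith [hfin, h6]
    have e1 : ‖lam‖ * ‖lam‖ ≤ (L * ‖v‖) * (L * ‖v‖) :=
      mul_self_le_mul_self hn0.le hnv
    have e2 : (L * s') * (L * s') < S * S :=
      mul_self_lt_mul_self (mul_nonneg hL hs'0.le) hLs'
    have e3 : (L * ‖v‖) * (L * ‖v‖) = L ^ 2 + (L * s') * (L * s') := by
      have h7 : (L * ‖v‖) * (L * ‖v‖) = L ^ 2 * ‖v‖ ^ 2 := by ring
      rw [h7, hv2]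
      ring
    have e4 : S * S = ‖lam‖ * ‖lam‖ - L ^ 2 := by linarith [hS2]
    linarith [e1, e2, e3, e4]

set_option maxHeartbeats 1600000 in
theorem stmt1 {d : ℕ} (Δ : Set (EuclideanSpace ℝ (Fin d)))
    (hΔne : Δ.Nonempty) (hΔconv : Convex ℝ Δ) (hΔcomp : IsCompact Δ)
    (h0Δ : (0 : EuclideanSpace ℝ (Fin d)) ∈ Δ)
    (L : NNReal) (R : EuclideanSpace ℝ (Fin d) → ℝ)
    (hRconv : ConvexOn ℝ Δ R) (hRlip : LipschitzOnWith L R Δ)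
    (Rbar : EuclideanSpace ℝ (Fin d) → ℝ)
    (hRbar : ∀ δ, Rbar δ =
      ⨅ δ' : Δ, (R δ' + (L : ℝ) * ‖δ - (δ' : EuclideanSpace ℝ (Fin d))‖))
    (η : ℝ) (hη : 0 < η)
    (lam γ δ : ℕ → EuclideanSpace ℝ (Fin d))
    (hδ : ∀ t, δ t ∈ Δ)
    (hlam0 : ∀ y, Rbar 0 + ⟪lam 0, y - 0⟫ ≤ Rbar y)
    (hγmem : ∀ t, γ t ∈ closedBall (δ t) (diam Δ))
    (hγmax : ∀ t, ∀ g ∈ closedBall (δ t) (diam Δ),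
      ⟪lam t, g⟫ - Rbar g ≤ ⟪lam t, γ t⟫ - Rbar (γ t))
    (hrec : ∀ t, lam (t + 1) = lam t - η • (γ t - δ t)) :
    ∀ t, ‖lam t‖ ≤ (L : ℝ) + 2 * η * diam Δ := by
  have hLnn : (0 : ℝ) ≤ L := L.coe_nonneg
  haveI hne : Nonempty ↥Δ := hΔne.to_subtype
  have hDnn : 0 ≤ diam Δ := diam_nonneg
  obtain ⟨δ₀, hδ₀⟩ := hΔne
  -- boundedness below of the defining family of `Rbar`
  have hbdd : ∀ x : EuclideanSpace ℝ (Fin d),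
      BddBelow (Set.range fun δ' : Δ =>
        R δ' + (L : ℝ) * ‖x - (δ' : EuclideanSpace ℝ (Fin d))‖) := by
    intro x
    refine ⟨R δ₀ - L * ‖x - δ₀‖, ?_⟩
    rintro _ ⟨δ', rfl⟩
    have h := hRlip.dist_le_mul δ' δ'.2 δ₀ hδ₀
    rw [Real.dist_eq, dist_eq_norm] at h
    have h1 := neg_abs_le (R δ' - R δ₀)
    have h2 : ‖(δ' : EuclideanSpace ℝ (Fin d)) - δ₀‖ ≤ ‖x - δ'‖ + ‖x - δ₀‖ := by
      have h4 : (δ' : EuclideanSpace ℝ (Fin d)) - δ₀ = (x - δ₀) - (x - δ') := by abel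
      rw [h4, norm_sub_rev]
      exact norm_sub_le _ _
    have h3 := mul_le_mul_of_nonneg_left h2 hLnn
    dsimp only
    linarith
  -- Lipschitz property of `Rbar`
  have hlip : ∀ x y, Rbar x ≤ Rbar y + L * ‖x - y‖ := by
    intro x y
    rw [hRbar x, hRbar y, ← sub_le_iff_le_add]
    apply le_ciInf
    intro δ'
    rw [sub_le_iff_le_add]
    have h1 : (⨅ δ'' : Δ, (R δ'' + (L : ℝ) * ‖x - (δ'' : EuclideanSpace ℝ (Fin d))‖)) ≤
        R δ' + L * ‖x - δ'‖ := ciInf_le (hbdd x) δ'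
    have h2 : ‖x - (δ' : EuclideanSpace ℝ (Fin d))‖ ≤ ‖y - δ'‖ + ‖x - y‖ := by
      have h4 : x - (δ' : EuclideanSpace ℝ (Fin d)) = (x - y) + (y - δ') := by abel
      rw [h4]
      exact (norm_add_le _ _).trans (by rw [add_comm])
    have h3 := mul_le_mul_of_nonneg_left h2 hLnn
    linarith
  -- bound on the initial dual variable
  have hlam0norm : ‖lam 0‖ ≤ L := by
    have h1 := hlam0 (lam 0)
    have h2 := hlip (lam 0) 0
    rw [sub_zero, real_inner_self_eq_norm_sq] at h1
    rw [sub_zero] at h2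
    rcases eq_or_lt_of_le (norm_nonneg (lam 0)) with h | h
    · rw [← h]; exact hLnn
    · by_contra hc
      push_neg at hc
      have h4 := mul_lt_mul_of_pos_right hc h
      nlinarith [h1, h2, h4]
  intro t
  induction t with
  | zero =>
      have h0 : 0 ≤ 2 * η * diam Δ := by
        have := mul_nonneg (mul_nonneg (by norm_num : (0:ℝ) ≤ 2) hη.le) hDnn
        linarith
      linarith
  | succ t ih =>
      have hrnorm : ‖γ t - δ t‖ ≤ diam Δ := by
        have h := hγmem t
        rw [mem_closedBall, dist_eq_norm] at h
        exact h
      rcases le_or_gt ‖lam t‖ ((L : ℝ) + η * diam Δ) with hsmall | hbig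
      · rw [hrec t]
        have hs1 : ‖lam t - η • (γ t - δ t)‖ ≤ ‖lam t‖ + ‖η • (γ t - δ t)‖ := norm_sub_le _ _
        have hs2 : ‖η • (γ t - δ t)‖ ≤ η * diam Δ := by
          rw [norm_smul, Real.norm_eq_abs, abs_of_pos hη]
          exact mul_le_mul_of_nonneg_left hrnorm hη.le
        linarith
      · have hηD : 0 < η * diam Δ := by linarith [hbig, ih]
        have hD0 : 0 < diam Δ := by
          rcases lt_or_eq_of_le hDnn with h | h
          · exact h
          · rw [← h, mul_zero] at hηD; exact absurd hηD (lt_irrefl 0)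
        have hnL : (L : ℝ) < ‖lam t‖ := by linarith [hbig, hηD]
        have hn0 : 0 < ‖lam t‖ := lt_of_le_of_lt hLnn hnL
        -- the maximizer lies on the sphere
        have hrD : ‖γ t - δ t‖ = diam Δ := by
          by_contra hne'
          have hrlt : ‖γ t - δ t‖ < diam Δ := lt_of_le_of_ne hrnorm hne'
          set ε := diam Δ - ‖γ t - δ t‖ with hε
          clear_value ε
          have hε0 : 0 < ε := by linarith
          have hg : γ t + (ε / ‖lam t‖) • lam t ∈ closedBall (δ t) (diam Δ) := by
            rw [mem_closedBall, dist_eq_norm]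
            have he : γ t + (ε / ‖lam t‖) • lam t - δ t
                = (γ t - δ t) + (ε / ‖lam t‖) • lam t := by abel
            rw [he]
            have hn1 : ‖(ε / ‖lam t‖) • lam t‖ = ε := by
              rw [norm_smul, Real.norm_eq_abs, abs_of_pos (div_pos hε0 hn0)]
              field_simp
            calc ‖(γ t - δ t) + (ε / ‖lam t‖) • lam t‖
                ≤ ‖γ t - δ t‖ + ‖(ε / ‖lam t‖) • lam t‖ := norm_add_le _ _
              _ = diam Δ := by rw [hn1, hε]; ring
          have hmax := hγmax t _ hg
          have hinner : ⟪lam t, γ t + (ε / ‖lam t‖) • lam t⟫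
              = ⟪lam t, γ t⟫ + ε * ‖lam t‖ := by
            rw [inner_add_right, real_inner_smul_right, real_inner_self_eq_norm_sq]
            field_simp
          have hlipg := hlip (γ t + (ε / ‖lam t‖) • lam t) (γ t)
          have hnorm : ‖γ t + (ε / ‖lam t‖) • lam t - γ t‖ = ε := by
            have he : γ t + (ε / ‖lam t‖) • lam t - γ t = (ε / ‖lam t‖) • lam t := by abel
            rw [he, norm_smul, Real.norm_eq_abs, abs_of_pos (div_pos hε0 hn0)]
            field_simp
          rw [hnorm] at hlipg
          linarith [hmax, hinner, hlipg, mul_pos hε0 (sub_pos.2 hnL)]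
        -- apply the key cone lemma
        have hz : ‖δ t - γ t‖ = diam Δ := by rw [norm_sub_rev]; exact hrD
        have hyp : ∀ q : EuclideanSpace ℝ (Fin d),
            ‖q - (δ t - γ t)‖ ≤ diam Δ → ⟪lam t, q⟫ ≤ (L : ℝ) * ‖q‖ := by
          intro q hq
          have hp : γ t + q ∈ closedBall (δ t) (diam Δ) := by
            rw [mem_closedBall, dist_eq_norm]
            have he : γ t + q - δ t = q - (δ t - γ t) := by abel
            rw [he]
            exact hq
          have hmax := hγmax t _ hp
          have hlipq := hlip (γ t + q) (γ t)
          have hnq : γ t + q - γ t = q := by abel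
          rw [hnq] at hlipq
          rw [inner_add_right] at hmax
          linarith
        have hkey := key_cone (lam t) (δ t - γ t) (L : ℝ) (diam Δ) hLnn hD0 hz hnL hyp
        have hs : η * diam Δ ≤ Real.sqrt (‖lam t‖ ^ 2 - (L : ℝ) ^ 2) := by
          rw [show η * diam Δ = Real.sqrt ((η * diam Δ) ^ 2) from
            (Real.sqrt_sq hηD.le).symm]
          apply Real.sqrt_le_sqrt
          have hb1 : ((L : ℝ) + η * diam Δ) * ((L : ℝ) + η * diam Δ)
              ≤ ‖lam t‖ * ‖lam t‖ :=
            mul_self_le_mul_self (by linarith) hbig.le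
          nlinarith [hb1, mul_nonneg hLnn hηD.le]
        have hinner2 : ⟪lam t, γ t - δ t⟫ = -⟪lam t, δ t - γ t⟫ := by
          rw [← inner_neg_right]
          congr 1
          abel
        have hsge : η * diam Δ * diam Δ ≤ ⟪lam t, γ t - δ t⟫ := by
          rw [hinner2]
          have h5 := mul_le_mul_of_nonneg_left hs hD0.le
          calc η * diam Δ * diam Δ = diam Δ * (η * diam Δ) := by ring
            _ ≤ diam Δ * Real.sqrt (‖lam t‖ ^ 2 - (L : ℝ) ^ 2) := h5
            _ ≤ -⟪lam t, δ t - γ t⟫ := hkey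
        rw [hrec t]
        have hnsq : ‖lam t - η • (γ t - δ t)‖ ^ 2
            = ‖lam t‖ ^ 2 - 2 * η * ⟪lam t, γ t - δ t⟫ + η ^ 2 * diam Δ ^ 2 := by
          rw [norm_sub_sq_real, real_inner_smul_right, norm_smul, Real.norm_eq_abs,
            abs_of_pos hη, hrD]
          ring
        apply le_of_sq_le_sq'' (norm_nonneg _) (by linarith)
        rw [hnsq]
        have hf1 := mul_le_mul_of_nonneg_left hsge (by linarith : (0:ℝ) ≤ 2 * η)
        have hf2 := mul_self_le_mul_self (norm_nonneg (lam t)) ih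
        nlinarith [hf1, hf2, sq_nonneg (η * diam Δ)]
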